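/- For positive integers k and l, the rational function ([2]_{t^2} [4]_{t^2} ⋯ [2k+2l]_{t^2}) / ([k]_{t^2} [2]_{t^2} [4]_{t^2} ⋯ [2(k-1)]_{t^2} · [2]_{t^2} [4]_{t^2} ⋯ [2l]_{t^2}) equals binom(k+l, k)_{t^4} · [2]_{t^{2k}}. In particular it is a polynomial with nonnegative integer coefficients. -/
import Mathlib


open Polynomial

/-- The quantum number `[a]_{t^b} = 1 + t^b + ⋯ + t^{b(a-1)}` as a polynomial in `ℚ[t]`. -/
noncomputable def qnumPow (a b : ℕ) : Polynomial ℚ := ∑ i ∈ Finset.range a, X ^ (b * i)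

/-- The Gaussian (quantum) binomial coefficient `binom(n,k)_q` as a polynomial in `ℤ[q]`,
counting `k`-element subsets of `{0, …, n-1}` by inversions. -/
noncomputable def gaussBinom (n k : ℕ) : Polynomial ℤ :=
  ∑ S ∈ Finset.powersetCard k (Finset.range n), X ^ ((∑ i ∈ S, i) - k * (k - 1) / 2)

/-- The Gaussian binomial `binom(n,k)` in the variable `t^m`, over `ℚ`. -/
noncomputable def gaussBinomPow (n k m : ℕ) : Polynomial ℚ :=
  ((gaussBinom n k).map (Int.castRingHom ℚ)).comp (X ^ m)

/-- triangle number recurrence -/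
lemma tri_succ (k : ℕ) : (k + 1) * k / 2 = k * (k - 1) / 2 + k := by
  have h1 := Nat.choose_two_right k
  have h2 := Nat.choose_two_right (k + 1)
  rw [Nat.succ_sub_one] at h2
  rw [← h1, ← h2, Nat.choose_succ_succ, Nat.choose_one_right, Nat.add_comm]

lemma minsum : ∀ (n : ℕ) (S : Finset ℕ), S.card = n → n * (n - 1) / 2 ≤ ∑ i ∈ S, i := by
  intro n
  induction n with
  | zero => intro S h; simp
  | succ n ih =>
    intro S h
    have hne : S.Nonempty := Finset.card_pos.mp (by omega)
    set m := S.max' hne with hm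
    have hmem : m ∈ S := S.max'_mem hne
    have hrest : (S.erase m).card = n := by rw [Finset.card_erase_of_mem hmem, h]; omega
    have hsub : S.erase m ⊆ Finset.range m := by
      intro i hi
      have h1 : i ∈ S := Finset.mem_of_mem_erase hi
      have h2 : i ≠ m := Finset.ne_of_mem_erase hi
      have h3 := S.le_max' i h1
      simp only [Finset.mem_range]; omega
    have hnm : n ≤ m := by
      have := Finset.card_le_card hsub
      rw [hrest, Finset.card_range] at this; exact this
    have hih := ih (S.erase m) hrest
    have hsum : m + ∑ i ∈ S.erase m, i = ∑ i ∈ S, i := Finset.add_sum_erase S (fun i => i) hmem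
    have ht := tri_succ n
    simp only [Nat.add_sub_cancel]
    omega

lemma gaussBinom_zero (n : ℕ) : gaussBinom n 0 = 1 := by
  simp [gaussBinom]

lemma gaussBinom_self (n : ℕ) : gaussBinom n n = 1 := by
  unfold gaussBinom
  have hp := Finset.powersetCard_self (Finset.range n)
  rw [Finset.card_range] at hp
  rw [hp, Finset.sum_singleton, Finset.sum_range_id, Nat.sub_self, pow_zero]

lemma gaussBinom_of_lt {n k : ℕ} (h : n < k) : gaussBinom n k = 0 := by
  unfold gaussBinom
  rw [Finset.powersetCard_eq_empty.mpr (by simpa using h), Finset.sum_empty]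

lemma gaussBinom_pascal (n k : ℕ) :
    gaussBinom (n + 1) (k + 1) = gaussBinom n (k + 1) + X ^ (n - k) * gaussBinom n k := by
  unfold gaussBinom
  simp only [Nat.add_sub_cancel]
  rw [Finset.range_add_one, Finset.powersetCard_succ_insert Finset.notMem_range_self]
  have hdisj : Disjoint (Finset.powersetCard (k + 1) (Finset.range n))
      ((Finset.powersetCard k (Finset.range n)).image (insert n)) := by
    rw [Finset.disjoint_left]
    intro T hT hT'
    have hTsub : T ⊆ Finset.range n := (Finset.mem_powersetCard.mp hT).1
    obtain ⟨S, hS, rfl⟩ := Finset.mem_image.mp hT'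
    have : n ∈ Finset.range n := hTsub (Finset.mem_insert_self n S)
    exact absurd (Finset.mem_range.mp this) (lt_irrefl n)
  rw [Finset.sum_union hdisj]
  congr 1
  rw [Finset.sum_image (by
    intro x hx y hy hxy
    have hnx : n ∉ x := fun h => absurd (Finset.mem_range.mp ((Finset.mem_powersetCard.mp hx).1 h)) (lt_irrefl n)
    have hny : n ∉ y := fun h => absurd (Finset.mem_range.mp ((Finset.mem_powersetCard.mp hy).1 h)) (lt_irrefl n)
    rw [← Finset.erase_insert hnx, hxy, Finset.erase_insert hny]), Finset.mul_sum]
  refine Finset.sum_congr rfl ?_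
  intro S hS
  have hSsub : S ⊆ Finset.range n := (Finset.mem_powersetCard.mp hS).1
  have hScard : S.card = k := (Finset.mem_powersetCard.mp hS).2
  have hnS : n ∉ S := fun h => absurd (Finset.mem_range.mp (hSsub h)) (lt_irrefl n)
  rw [Finset.sum_insert hnS, ← pow_add]
  congr 1
  have h1 := minsum k S hScard
  have h2 : k ≤ n := by
    have := Finset.card_le_card hSsub
    rw [hScard, Finset.card_range] at this; exact this
  have ht := tri_succ k
  omega

noncomputable def znum (a : ℕ) : Polynomial ℤ := ∑ i ∈ Finset.range a, X ^ i

noncomputable def zfact (n : ℕ) : Polynomial ℤ := ∏ i ∈ Finset.range n, znum (i + 1)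

lemma znum_add (a b : ℕ) : znum (a + b) = znum a + X ^ a * znum b := by
  unfold znum
  rw [Finset.sum_range_add, Finset.mul_sum]
  congr 1
  exact Finset.sum_congr rfl fun i _ => by rw [← pow_add]

lemma zfact_succ (n : ℕ) : zfact (n + 1) = zfact n * znum (n + 1) := by
  unfold zfact; rw [Finset.prod_range_succ]

lemma zfact_eq : ∀ n k, k ≤ n → zfact n = gaussBinom n k * zfact k * zfact (n - k) := by
  intro n
  induction n with
  | zero => intro k hk; interval_cases k; simp [zfact, gaussBinom_zero]
  | succ n ih =>
    intro k hk
    rcases Nat.eq_or_lt_of_le hk with h | h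
    · subst h
      simp [gaussBinom_self, Nat.sub_self, zfact]
    · have hkn : k ≤ n := by omega
      rcases Nat.eq_zero_or_pos k with h0 | h0
      · subst h0
        simp [gaussBinom_zero, zfact]
      · obtain ⟨k', rfl⟩ : ∃ k', k = k' + 1 := ⟨k - 1, by omega⟩
        have e1 : n + 1 - (k' + 1) = n - k' := by omega
        have ih1 := ih (k' + 1) hkn
        have ih2 := ih k' (by omega)
        have hA : zfact (n - k') = zfact (n - (k' + 1)) * znum (n - k') := by
          have : n - k' = (n - (k' + 1)) + 1 := by omega
          rw [this, zfact_succ, ← this]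
        have hB : zfact (k' + 1) = zfact k' * znum (k' + 1) := zfact_succ k'
        have hzn : znum (n + 1) = znum (n - k') + X ^ (n - k') * znum (k' + 1) := by
          rw [← znum_add]; congr 1; omega
        calc zfact (n + 1) = znum (n + 1) * zfact n := by rw [zfact_succ, mul_comm]
          _ = znum (n - k') * zfact n + X ^ (n - k') * znum (k' + 1) * zfact n := by
              rw [hzn]; ring
          _ = znum (n - k') * (gaussBinom n (k' + 1) * zfact (k' + 1) * zfact (n - (k' + 1)))
              + X ^ (n - k') * znum (k' + 1) * (gaussBinom n k' * zfact k' * zfact (n - k')) := by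
              rw [← ih1, ← ih2]
          _ = (gaussBinom n (k' + 1) + X ^ (n - k') * gaussBinom n k') * zfact (k' + 1)
              * zfact (n + 1 - (k' + 1)) := by
              rw [e1, hA, hB]; ring
          _ = gaussBinom (n + 1) (k' + 1) * zfact (k' + 1) * zfact (n + 1 - (k' + 1)) := by
              rw [gaussBinom_pascal]

lemma qnumPow_comp (a b c : ℕ) : (qnumPow a b).comp (X ^ c) = qnumPow a (b * c) := by
  unfold qnumPow
  simp only [Polynomial.comp, Polynomial.eval₂_finset_sum, Polynomial.eval₂_X_pow]
  refine Finset.sum_congr rfl fun i _ => ?_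
  rw [← pow_mul]
  ring_nf

lemma qnumPow_two (b : ℕ) : qnumPow 2 b = 1 + X ^ b := by
  unfold qnumPow
  rw [Finset.sum_range_succ, Finset.sum_range_one]
  simp

lemma qnum_add (a b : ℕ) : qnumPow (a + b) 1 = qnumPow a 1 + X ^ a * qnumPow b 1 := by
  unfold qnumPow
  simp only [one_mul]
  rw [Finset.sum_range_add, Finset.mul_sum]
  congr 1
  exact Finset.sum_congr rfl fun i _ => by rw [← pow_add]

lemma I1base (a : ℕ) : qnumPow (2 * a) 1 = qnumPow 2 a * qnumPow a 1 := by
  rw [two_mul, qnum_add, qnumPow_two]; ring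

lemma I2base (a : ℕ) : qnumPow (2 * a) 1 = qnumPow 2 1 * qnumPow a 2 := by
  induction a with
  | zero => simp [qnumPow]
  | succ a ih =>
    have hL : qnumPow (2 * (a + 1)) 1 = qnumPow (2 * a) 1 + X ^ (2 * a) + X ^ (2 * a + 1) := by
      have h2 : 2 * (a + 1) = 2 * a + 1 + 1 := by ring
      rw [h2]
      unfold qnumPow
      rw [Finset.sum_range_succ, Finset.sum_range_succ]
      simp [one_mul]
    have hR : qnumPow (a + 1) 2 = qnumPow a 2 + X ^ (2 * a) := by
      unfold qnumPow
      rw [Finset.sum_range_succ]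
    rw [hL, hR, ih, qnumPow_two]
    ring

lemma I1 (a b : ℕ) : qnumPow (2 * a) b = qnumPow 2 (a * b) * qnumPow a b := by
  have h := congrArg (fun p => Polynomial.comp p (X ^ b)) (I1base a)
  simp only [Polynomial.mul_comp, qnumPow_comp, one_mul] at h
  exact h

lemma I2 (a b : ℕ) : qnumPow (2 * a) b = qnumPow 2 b * qnumPow a (2 * b) := by
  have h := congrArg (fun p => Polynomial.comp p (X ^ b)) (I2base a)
  simp only [Polynomial.mul_comp, qnumPow_comp, one_mul] at h
  exact h

lemma qnum_map (a : ℕ) : (znum a).map (Int.castRingHom ℚ) = qnumPow a 1 := by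
  unfold znum qnumPow
  rw [← Polynomial.coe_mapRingHom, map_sum]
  exact Finset.sum_congr rfl fun i _ => by simp

lemma qfact_map (n : ℕ) :
    (zfact n).map (Int.castRingHom ℚ) = ∏ i ∈ Finset.range n, qnumPow (i + 1) 1 := by
  unfold zfact
  rw [← Polynomial.coe_mapRingHom, map_prod]
  exact Finset.prod_congr rfl fun i _ => by rw [Polynomial.coe_mapRingHom, qnum_map]

lemma prod_qnum_comp (n m : ℕ) :
    (∏ i ∈ Finset.range n, qnumPow (i + 1) 1).comp (X ^ m)
      = ∏ i ∈ Finset.range n, qnumPow (i + 1) m := by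
  induction n with
  | zero => simp
  | succ n ih =>
    rw [Finset.prod_range_succ, Polynomial.mul_comp, ih, qnumPow_comp, one_mul,
      Finset.prod_range_succ]

lemma gauss_identity (k l : ℕ) :
    ∏ i ∈ Finset.range (k + l), qnumPow (i + 1) 4 =
      gaussBinomPow (k + l) k 4 * (∏ i ∈ Finset.range k, qnumPow (i + 1) 4)
        * ∏ i ∈ Finset.range l, qnumPow (i + 1) 4 := by
  have h1 := zfact_eq (k + l) k (Nat.le_add_right k l)
  rw [Nat.add_sub_cancel_left] at h1
  have h2 := congrArg (Polynomial.map (Int.castRingHom ℚ)) h1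
  rw [Polynomial.map_mul, Polynomial.map_mul, qfact_map, qfact_map, qfact_map] at h2
  have h3 := congrArg (fun p => Polynomial.comp p (X ^ 4)) h2
  simp only [Polynomial.mul_comp, prod_qnum_comp] at h3
  exact h3

lemma qnum_eval_one (a b : ℕ) : Polynomial.eval 1 (qnumPow a b) = (a : ℚ) := by
  unfold qnumPow
  rw [Polynomial.eval_finset_sum]
  simp

lemma qnumPow_ne_zero {a : ℕ} (b : ℕ) (ha : 0 < a) : qnumPow a b ≠ 0 := by
  intro h
  have h2 := qnum_eval_one a b
  rw [h, Polynomial.eval_zero] at h2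
  have h3 : a = 0 := by exact_mod_cast h2.symm
  omega

/-- For positive integers `k`, `l`, the rational function
`([2]_{t²}[4]_{t²}⋯[2k+2l]_{t²}) / ([k]_{t²}·[2]_{t²}⋯[2(k-1)]_{t²}·[2]_{t²}⋯[2l]_{t²})`
equals `binom(k+l,k)_{t⁴}·[2]_{t^{2k}}`; in particular it is a polynomial with
nonnegative integer coefficients. (This is the Poincaré polynomial of the real
Grassmannian `SO(2k+2l+1)/(SO(2k)×SO(2l+1))`.) -/
theorem stmt_7 (k l : ℕ) (hk : 0 < k) (hl : 0 < l) :
    (∏ i ∈ Finset.range (k + l),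
          algebraMap (Polynomial ℚ) (RatFunc ℚ) (qnumPow (2 * (i + 1)) 2)) /
        (algebraMap (Polynomial ℚ) (RatFunc ℚ) (qnumPow k 2) *
          (∏ i ∈ Finset.range (k - 1),
            algebraMap (Polynomial ℚ) (RatFunc ℚ) (qnumPow (2 * (i + 1)) 2)) *
          ∏ i ∈ Finset.range l,
            algebraMap (Polynomial ℚ) (RatFunc ℚ) (qnumPow (2 * (i + 1)) 2)) =
      algebraMap (Polynomial ℚ) (RatFunc ℚ) (gaussBinomPow (k + l) k 4 * qnumPow 2 (2 * k)) ∧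
    (∀ j, 0 ≤ (gaussBinomPow (k + l) k 4 * qnumPow 2 (2 * k)).coeff j) ∧
    (∀ j, ∃ z : ℤ, (gaussBinomPow (k + l) k 4 * qnumPow 2 (2 * k)).coeff j = z) := by
  -- abbreviations
  set q22 := qnumPow 2 2 with hq22def
  have hsplit : ∀ m : ℕ, ∏ i ∈ Finset.range m, qnumPow (2 * (i + 1)) 2
      = q22 ^ m * ∏ i ∈ Finset.range m, qnumPow (i + 1) 4 := by
    intro m
    rw [Finset.prod_congr rfl (fun i _ => by
      have := I2 (i + 1) 2
      norm_num at this
      exact this), Finset.prod_mul_distrib, Finset.prod_const, Finset.card_range]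
  -- key identity in ℚ[t]
  have hk2 : qnumPow k 2 * qnumPow 2 (2 * k) = q22 * qnumPow k 4 := by
    have h1 := I1 k 2
    have h2 := I2 k 2
    norm_num at h2
    rw [h2] at h1
    rw [show 2 * k = k * 2 by ring]
    exact (mul_comm _ _).trans h1.symm
  have hPk : ∏ i ∈ Finset.range k, qnumPow (i + 1) 4
      = qnumPow k 4 * ∏ i ∈ Finset.range (k - 1), qnumPow (i + 1) 4 := by
    conv_lhs => rw [show k = (k - 1) + 1 by omega]
    rw [Finset.prod_range_succ, show k - 1 + 1 = k by omega, mul_comm]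
  have hpow : q22 ^ (k + l) = q22 ^ (k - 1) * q22 ^ l * q22 := by
    rw [← pow_add, ← pow_succ]
    congr 1
    omega
  have hmain : ∏ i ∈ Finset.range (k + l), qnumPow (2 * (i + 1)) 2
      = (qnumPow k 2 * (∏ i ∈ Finset.range (k - 1), qnumPow (2 * (i + 1)) 2)
          * ∏ i ∈ Finset.range l, qnumPow (2 * (i + 1)) 2)
        * (gaussBinomPow (k + l) k 4 * qnumPow 2 (2 * k)) := by
    rw [hsplit (k + l), hsplit (k - 1), hsplit l, gauss_identity k l, hPk, hpow]
    calc (q22 ^ (k - 1) * q22 ^ l * q22) *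
          (gaussBinomPow (k + l) k 4 *
            (qnumPow k 4 * ∏ i ∈ Finset.range (k - 1), qnumPow (i + 1) 4) *
            ∏ i ∈ Finset.range l, qnumPow (i + 1) 4)
        = (q22 * qnumPow k 4) *
            (q22 ^ (k - 1) * ∏ i ∈ Finset.range (k - 1), qnumPow (i + 1) 4) *
            (q22 ^ l * ∏ i ∈ Finset.range l, qnumPow (i + 1) 4) *
            gaussBinomPow (k + l) k 4 := by ring
      _ = _ := by rw [← hk2]; ring
  -- integer coefficient polynomial
  set Pz : Polynomial ℤ := (gaussBinom (k + l) k).comp (X ^ 4) * (1 + X ^ (2 * k)) with hPzdef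
  have hPzmap : Pz.map (Int.castRingHom ℚ) = gaussBinomPow (k + l) k 4 * qnumPow 2 (2 * k) := by
    rw [hPzdef, Polynomial.map_mul, Polynomial.map_comp, Polynomial.map_pow, Polynomial.map_X,
      qnumPow_two]
    congr 1
    rw [Polynomial.map_add, Polynomial.map_one, Polynomial.map_pow, Polynomial.map_X]
  have hPznn : ∀ j, 0 ≤ Pz.coeff j := by
    have hcomp : (gaussBinom (k + l) k).comp (X ^ 4)
        = ∑ S ∈ Finset.powersetCard k (Finset.range (k + l)),
            (X : Polynomial ℤ) ^ (4 * ((∑ i ∈ S, i) - k * (k - 1) / 2)) := by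
      unfold gaussBinom
      simp only [Polynomial.comp, Polynomial.eval₂_finset_sum, Polynomial.eval₂_X_pow, ← pow_mul]
    have hg : ∀ j, 0 ≤ ((gaussBinom (k + l) k).comp (X ^ 4)).coeff j := by
      intro j
      rw [hcomp, Polynomial.finset_sum_coeff]
      refine Finset.sum_nonneg fun S _ => ?_
      rw [Polynomial.coeff_X_pow]
      split <;> norm_num
    have h2 : ∀ j, 0 ≤ ((1 : Polynomial ℤ) + X ^ (2 * k)).coeff j := by
      intro j
      rw [Polynomial.coeff_add, Polynomial.coeff_one, Polynomial.coeff_X_pow]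
      split_ifs <;> norm_num
    intro j
    rw [hPzdef, Polynomial.coeff_mul]
    exact Finset.sum_nonneg fun x _ => mul_nonneg (hg x.1) (h2 x.2)
  have hcoeff : ∀ j, (gaussBinomPow (k + l) k 4 * qnumPow 2 (2 * k)).coeff j
      = ((Pz.coeff j : ℤ) : ℚ) := by
    intro j
    rw [← hPzmap, Polynomial.coeff_map]
    simp
  refine ⟨?_, fun j => ?_, fun j => ⟨Pz.coeff j, hcoeff j⟩⟩
  · have hBne : qnumPow k 2 * (∏ i ∈ Finset.range (k - 1), qnumPow (2 * (i + 1)) 2)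
        * ∏ i ∈ Finset.range l, qnumPow (2 * (i + 1)) 2 ≠ 0 := by
      refine mul_ne_zero (mul_ne_zero (qnumPow_ne_zero 2 hk) ?_) ?_ <;>
        exact Finset.prod_ne_zero_iff.mpr fun i _ => qnumPow_ne_zero 2 (by omega)
    rw [← map_prod, ← map_prod, ← map_prod, ← map_mul, ← map_mul,
      div_eq_iff (RatFunc.algebraMap_ne_zero hBne), ← map_mul]
    exact congrArg _ (hmain.trans (mul_comm _ _))
  · rw [hcoeff j]
    exact_mod_cast hPznn j
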